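/- Let $\psi : \mathbb{R}^n \to \mathbb{R}$ be a convex, positively homogeneous function, increasing in each variable, with $\psi > 0$ outside $\overline{\mathbb{R}_-^n}$ (so $\psi = h_\Gamma$ for a compact convex $\Gamma \subset \overline{\mathbb{R}_+^n}$ containing a neighborhood of 0 in $\overline{\mathbb{R}_+^n}$). Then for $c > 0$, $\int_{\mathbb{R}^n} e^{-2[c\max\{\psi(t),0\} - \sum_k t_k]}\, dt < \infty$ if and only if $c \cdot \max\{\psi(t), 0\} > \sum_k t_k$ for all $t \neq 0$, equivalently if and only if the point $(1/c, \ldots, 1/c)$ lies in the interior of the indicator diagram $\Gamma^+$ of $\max\{\psi,0\}$. -/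

import Mathlib

open MeasureTheory Set

noncomputable section


lemma aux_exp_neg_abs : Integrable (fun x : ℝ => Real.exp (-|x|)) := by
  have h1 : IntegrableOn (fun x : ℝ => Real.exp (-|x|)) (Iic 0) := by
    refine (integrableOn_exp_Iic 0).congr_fun (fun x hx => ?_) measurableSet_Iic
    rw [abs_of_nonpos hx, neg_neg]
  have h2 : IntegrableOn (fun x : ℝ => Real.exp (-|x|)) (Ioi 0) := by
    refine (exp_neg_integrableOn_Ioi 0 one_pos).congr_fun (fun x hx => ?_) measurableSet_Ioi
    rw [abs_of_pos hx]; ring_nf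
  have h := h1.union h2
  rwa [Iic_union_Ioi, integrableOn_univ] at h

lemma aux_exp_neg_mul_abs {a : ℝ} (ha : 0 < a) :
    Integrable (fun x : ℝ => Real.exp (-(a * |x|))) := by
  have h := aux_exp_neg_abs.comp_mul_left' (ne_of_gt ha)
  refine h.congr (Filter.Eventually.of_forall fun x => ?_)
  simp [abs_mul, abs_of_pos ha]

set_option maxHeartbeats 1000000

/-- for the convex image `ψ` of an indicator in `L*(ℂⁿ)` (convex,
positively homogeneous, increasing in each variable, positive outside `ℝ̄₋ⁿ`) and `c > 0`,
`∫_{ℝⁿ} e^{-2[c ψ⁺(t) - ∑ tₖ]} dt < ∞` iff `c ψ⁺(t) > ∑ tₖ` for all `t ≠ 0`, iff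
`(1/c)·𝟏` lies in the interior of the indicator diagram `Γ⁺ = {a | ⟨a,t⟩ ≤ ψ⁺(t) ∀t}`. -/
theorem stmt13 {n : ℕ} (ψ : (Fin n → ℝ) → ℝ)
    (hconv : ConvexOn ℝ Set.univ ψ)
    (hhom : ∀ c : ℝ, 0 < c → ∀ t, ψ (c • t) = c * ψ t)
    (hmono : ∀ s t : Fin n → ℝ, (∀ i, s i ≤ t i) → ψ s ≤ ψ t)
    (hpos : ∀ t : Fin n → ℝ, (∃ i, 0 < t i) → 0 < ψ t)
    (c : ℝ) (hc : 0 < c) :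
    (Integrable
        (fun t : Fin n → ℝ => Real.exp (-(2 * (c * max (ψ t) 0 - ∑ i, t i)))) volume ↔
      ∀ t : Fin n → ℝ, t ≠ 0 → (∑ i, t i) < c * max (ψ t) 0) ∧
    (Integrable
        (fun t : Fin n → ℝ => Real.exp (-(2 * (c * max (ψ t) 0 - ∑ i, t i)))) volume ↔
      (fun _ : Fin n => 1 / c) ∈
        interior {a : Fin n → ℝ | ∀ t, (∑ i, a i * t i) ≤ max (ψ t) 0}) := by
  -- basic notation
  set ψp : (Fin n → ℝ) → ℝ := fun t => max (ψ t) 0 with hψp_def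
  set Φ : (Fin n → ℝ) → ℝ := fun t => c * ψp t - ∑ i, t i with hΦ_def
  have hψ0 : ψ 0 = 0 := by
    have h := hhom 2 two_pos 0
    rw [smul_zero] at h; linarith
  have hψp0 : ψp 0 = 0 := by simp [hψp_def, hψ0]
  have hΦ0 : Φ 0 = 0 := by simp [hΦ_def, hψp0]
  have hψp_hom : ∀ a : ℝ, 0 < a → ∀ t, ψp (a • t) = a * ψp t := by
    intro a ha t
    simp only [hψp_def, hhom a ha t]
    rw [mul_max_of_nonneg _ _ ha.le, mul_zero]
  have hΦ_hom : ∀ a : ℝ, 0 < a → ∀ t, Φ (a • t) = a * Φ t := by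
    intro a ha t
    simp only [hΦ_def, hψp_hom a ha t, Pi.smul_apply, smul_eq_mul, ← Finset.mul_sum]
    ring
  have hψp_conv : ConvexOn ℝ Set.univ ψp := by
    have := hconv.sup (convexOn_const (0:ℝ) convex_univ)
    exact this
  have hsubadd : ∀ x y : Fin n → ℝ, ψp (x + y) ≤ ψp x + ψp y := by
    intro x y
    have h2 := hψp_hom (1/2) (by norm_num) (x + y)
    have h3 := hψp_conv.2 (mem_univ x) (mem_univ y)
      (by norm_num : (0:ℝ) ≤ 1/2) (by norm_num : (0:ℝ) ≤ 1/2) (by norm_num)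
    rw [show (1/2 : ℝ) • x + (1/2 : ℝ) • y = (1/2 : ℝ) • (x + y) by rw [smul_add]] at h3
    rw [h2] at h3
    simp only [smul_eq_mul] at h3
    linarith
  set K : ℝ := max (ψ (fun _ : Fin n => (1:ℝ))) 0 + 1 with hK_def
  have hK : 0 < K := by positivity
  have hbound : ∀ t, ψp t ≤ K * ‖t‖ := by
    intro t
    rcases eq_or_ne t 0 with rfl | ht
    · simp [hψp0]
    · have hnt : 0 < ‖t‖ := norm_pos_iff.mpr ht
      have h1 : ψ t ≤ ψ (‖t‖ • (fun _ : Fin n => (1:ℝ))) := by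
        apply hmono
        intro i
        have := norm_le_pi_norm t i
        rw [Real.norm_eq_abs] at this
        have : t i ≤ ‖t‖ := le_trans (le_abs_self _) this
        simpa using this
      rw [hhom _ hnt] at h1
      have h2 : ψ (fun _ : Fin n => (1:ℝ)) ≤ K := by rw [hK_def]; nlinarith [le_max_left (ψ (fun _ : Fin n => (1:ℝ))) 0]
      have h3 : ψ t ≤ K * ‖t‖ := by nlinarith
      exact max_le h3 (by positivity)
  have hlip : ∀ x y : Fin n → ℝ, ψp x ≤ ψp y + K * ‖x - y‖ := by
    intro x y
    have := hsubadd y (x - y)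
    rw [add_sub_cancel] at this
    exact le_trans this (by nlinarith [hbound (x - y)])
  have hcont_ψp : Continuous ψp := by
    have : LipschitzWith (Real.toNNReal K) ψp := by
      apply LipschitzWith.of_dist_le_mul
      intro x y
      rw [Real.dist_eq, Real.coe_toNNReal _ hK.le, dist_eq_norm]
      rw [abs_sub_le_iff]
      constructor
      · nlinarith [hlip x y]
      · nlinarith [hlip y x, norm_sub_rev x y]
    exact this.continuous
  have hcont_Φ : Continuous Φ :=
    ((continuous_const.mul hcont_ψp).sub
      (continuous_finset_sum _ fun i _ => continuous_apply i))
  have hcont_f : Continuous (fun t : Fin n → ℝ => Real.exp (-(2 * Φ t))) :=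
    Real.continuous_exp.comp ((continuous_const.mul hcont_Φ).neg)
  -- sum of abs bound
  have hsumabs : ∀ t : Fin n → ℝ, (∑ i, |t i|) ≤ n * ‖t‖ := by
    intro t
    calc (∑ i, |t i|) ≤ ∑ _i : Fin n, ‖t‖ := by
          apply Finset.sum_le_sum
          intro i _
          have := norm_le_pi_norm t i
          rwa [Real.norm_eq_abs] at this
      _ = n * ‖t‖ := by simp [Finset.sum_const, nsmul_eq_mul]
  have hsum_le : ∀ t : Fin n → ℝ, (∑ i, t i) ≤ n * ‖t‖ := by
    intro t
    refine le_trans (Finset.sum_le_sum fun i _ => le_abs_self (t i)) (hsumabs t)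
  -- statements
  set P : Prop := ∀ t : Fin n → ℝ, t ≠ 0 → (∑ i, t i) < c * ψp t with hP_def
  rcases Nat.eq_zero_or_pos n with hn | hn
  · -- n = 0 case
    subst hn
    haveI : IsFiniteMeasure (volume : Measure (Fin 0 → ℝ)) := by
      constructor
      rw [MeasureTheory.volume_pi, Measure.pi_univ]
      simp
    have hsub : ∀ t : Fin 0 → ℝ, t = 0 := fun t => Subsingleton.elim t 0
    have hInt : Integrable
        (fun t : Fin 0 → ℝ => Real.exp (-(2 * (c * max (ψ t) 0 - ∑ i, t i)))) volume := by
      have : (fun t : Fin 0 → ℝ => Real.exp (-(2 * (c * max (ψ t) 0 - ∑ i, t i))))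
          = fun _ => Real.exp (-(2 * (c * max (ψ 0) 0 - 0))) := by
        funext t; rw [hsub t]; simp
      rw [this]
      exact integrable_const _
    constructor
    · constructor
      · intro _ t ht; exact absurd (hsub t) ht
      · intro _; exact hInt
    · constructor
      · intro _
        have : {a : Fin 0 → ℝ | ∀ t, (∑ i, a i * t i) ≤ max (ψ t) 0} = univ := by
          ext a; simp only [mem_setOf_eq, mem_univ, iff_true]
          intro t; simp [le_max_right]
        rw [this, interior_univ]; exact mem_univ _
      · intro _; exact hInt
  · -- n ≥ 1
    haveI : Nonempty (Fin n) := ⟨⟨0, hn⟩⟩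
    have hnR : (0:ℝ) < n := by exact_mod_cast hn
    -- sphere nonempty
    have hone : ‖(fun _ => 1 : Fin n → ℝ)‖ = 1 := by
      rw [pi_norm_const (1:ℝ)]; simp
    -- P → uniform lower bound
    have hPunif : P → ∃ ε : ℝ, 0 < ε ∧ ∀ t, ε * ‖t‖ ≤ Φ t := by
      intro hP
      obtain ⟨z, hz, hmin⟩ := (isCompact_sphere (0 : Fin n → ℝ) 1).exists_isMinOn
        ⟨(fun _ => 1), by rwa [mem_sphere_zero_iff_norm]⟩ hcont_Φ.continuousOn
      have hz1 : ‖z‖ = 1 := mem_sphere_zero_iff_norm.mp hz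
      have hzne : z ≠ 0 := by intro h; rw [h, norm_zero] at hz1; norm_num at hz1
      have hm : 0 < Φ z := by
        have := hP z hzne
        simp only [hΦ_def]; linarith
      refine ⟨Φ z, hm, fun t => ?_⟩
      rcases eq_or_ne t 0 with rfl | ht
      · simp [hΦ0]
      · have hnt : 0 < ‖t‖ := norm_pos_iff.mpr ht
        have hu : (‖t‖⁻¹ • t) ∈ Metric.sphere (0 : Fin n → ℝ) 1 := by
          rw [mem_sphere_zero_iff_norm, norm_smul, norm_inv, norm_norm]
          field_simp
        have h1 : Φ z ≤ Φ (‖t‖⁻¹ • t) := hmin hu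
        have h2 : Φ t = ‖t‖ * Φ (‖t‖⁻¹ • t) := by
          rw [← hΦ_hom ‖t‖ hnt, smul_smul]
          field_simp
          rw [one_smul]
        have h3 := mul_le_mul_of_nonneg_left h1 hnt.le
        rw [← h2] at h3
        linarith
    -- P → integrable
    have hPQ : P → Integrable (fun t : Fin n → ℝ => Real.exp (-(2 * Φ t))) volume := by
      intro hP
      obtain ⟨ε, hε, hunif⟩ := hPunif hP
      set b : ℝ := 2 * ε / n with hb_def
      have hb : 0 < b := by positivity
      have hg : Integrable (fun t : Fin n → ℝ => ∏ i, Real.exp (-(b * |t i|))) volume :=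
        Integrable.fintype_prod (fun _ => aux_exp_neg_mul_abs hb)
      refine hg.mono' hcont_f.aestronglyMeasurable
        (Filter.Eventually.of_forall fun t => ?_)
      rw [Real.norm_eq_abs, abs_of_pos (Real.exp_pos _), ← Real.exp_sum]
      apply Real.exp_le_exp.mpr
      have h1 : (∑ i, -(b * |t i|)) = -(b * ∑ i, |t i|) := by
        rw [Finset.mul_sum]
        exact Finset.sum_neg_distrib _
      rw [h1, neg_le_neg_iff]
      have h2 : b * (∑ i, |t i|) ≤ b * (n * ‖t‖) :=
        mul_le_mul_of_nonneg_left (hsumabs t) hb.le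
      have h3 : b * (n * ‖t‖) = 2 * (ε * ‖t‖) := by
        rw [hb_def]; field_simp
      nlinarith [hunif t]
    -- integrable → P
    have hQP : Integrable (fun t : Fin n → ℝ => Real.exp (-(2 * Φ t))) volume → P := by
      intro hInt
      by_contra hnP
      rw [hP_def] at hnP
      push_neg at hnP
      obtain ⟨t₀, ht₀, hle⟩ := hnP
      have hΦt₀ : Φ t₀ ≤ 0 := by simp only [hΦ_def]; linarith
      have hnt₀ : 0 < ‖t₀‖ := norm_pos_iff.mpr ht₀
      set u : Fin n → ℝ := ‖t₀‖⁻¹ • t₀ with hu_def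
      have hu1 : ‖u‖ = 1 := by
        rw [hu_def, norm_smul, norm_inv, norm_norm]; field_simp
      have hΦu : Φ u ≤ 0 := by
        have := hΦ_hom ‖t₀‖⁻¹ (by positivity) t₀
        rw [← hu_def] at this
        rw [this]
        exact mul_nonpos_of_nonneg_of_nonpos (by positivity) hΦt₀
      set L : ℝ := c * K + n with hL_def
      have hL : 0 < L := by positivity
      have hΦlip : ∀ x y : Fin n → ℝ, Φ x ≤ Φ y + L * ‖x - y‖ := by
        intro x y
        have h1 := hlip x y
        have h2 : (∑ i, y i) - (∑ i, x i) ≤ n * ‖x - y‖ := by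
          have := hsum_le (y - x)
          rw [norm_sub_rev y x] at this
          simpa [Finset.sum_sub_distrib] using this
        simp only [hΦ_def, hL_def]
        nlinarith
      -- centers
      set ctr : ℕ → (Fin n → ℝ) := fun k => ((3 * k + 3 : ℝ)) • u with hctr_def
      have hΦctr : ∀ k, Φ (ctr k) ≤ 0 := by
        intro k
        rw [hctr_def]
        have hpos3 : (0:ℝ) < 3 * k + 3 := by positivity
        rw [hΦ_hom _ hpos3]
        exact mul_nonpos_of_nonneg_of_nonpos hpos3.le hΦu
      set S : Set (Fin n → ℝ) := {t | Φ t ≤ L} with hS_def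
      have hSmeas : MeasurableSet S :=
        (isClosed_le hcont_Φ continuous_const).measurableSet
      have hball : ∀ k, Metric.ball (ctr k) 1 ⊆ S := by
        intro k x hx
        rw [Metric.mem_ball, dist_eq_norm] at hx
        have := hΦlip x (ctr k)
        have := hΦctr k
        simp only [hS_def, mem_setOf_eq]
        nlinarith
      have hdisj : Pairwise (Function.onFun Disjoint (fun k => Metric.ball (ctr k) 1)) := by
        intro k j hkj
        apply Metric.ball_disjoint_ball
        rw [dist_eq_norm, hctr_def, ← sub_smul, norm_smul, hu1, mul_one]
        have : ((3 * k + 3 : ℝ)) - ((3 * j + 3 : ℝ)) = 3 * ((k : ℝ) - j) := by ring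
        rw [this, Real.norm_eq_abs, abs_mul]
        have : (1:ℝ) ≤ |(k:ℝ) - j| := by
          have hz : (1:ℤ) ≤ |(k:ℤ) - (j:ℤ)| :=
            Int.one_le_abs (sub_ne_zero.mpr (by exact_mod_cast hkj))
          exact_mod_cast hz
        rw [abs_of_nonneg (by norm_num : (0:ℝ) ≤ 3)]
        linarith
      have hStop : volume S = ⊤ := by
        have h1 : volume (⋃ k, Metric.ball (ctr k) 1) = ∑' k : ℕ, volume (Metric.ball (ctr k) 1) :=
          measure_iUnion hdisj fun k => measurableSet_ball
      -- each ball has the same positive volume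
        have h2 : ∀ k, volume (Metric.ball (ctr k) 1) = volume (Metric.ball (0 : Fin n → ℝ) 1) :=
          fun k => by rw [Measure.addHaar_ball_center]
        have h3 : volume (Metric.ball (0 : Fin n → ℝ) 1) ≠ 0 :=
          (Metric.measure_ball_pos volume 0 one_pos).ne'
        have h4 : volume (⋃ k, Metric.ball (ctr k) 1) = ⊤ := by
          rw [h1]
          simp_rw [h2]
          exact ENNReal.tsum_const_eq_top_of_ne_zero h3
        refine top_le_iff.mp ?_
        rw [← h4]
        exact measure_mono (iUnion_subset hball)
      -- contradiction
      have hconst : Integrable (fun _ : Fin n → ℝ => Real.exp (-(2 * L))) (volume.restrict S) := by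
        refine (hInt.restrict (s := S)).mono' aestronglyMeasurable_const ?_
        rw [ae_restrict_iff' hSmeas]
        refine Filter.Eventually.of_forall fun x hx => ?_
        rw [Real.norm_eq_abs, abs_of_pos (Real.exp_pos _)]
        apply Real.exp_le_exp.mpr
        simp only [hS_def, mem_setOf_eq] at hx
        nlinarith
      have := (integrable_const_iff.mp hconst)
      rcases this with h | h
      · exact absurd h (by positivity)
      · replace h := h.measure_univ_lt_top; rw [Measure.restrict_apply_univ] at h
        rw [hStop] at h
        exact absurd h (by simp)
    -- P ↔ interior
    have hPR : P → (fun _ : Fin n => 1 / c) ∈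
        interior {a : Fin n → ℝ | ∀ t, (∑ i, a i * t i) ≤ ψp t} := by
      intro hP
      obtain ⟨ε, hε, hunif⟩ := hPunif hP
      rw [mem_interior]
      refine ⟨Metric.ball (fun _ => 1 / c) (ε / (c * n)), ?_, Metric.isOpen_ball,
        Metric.mem_ball_self (by positivity)⟩
      intro a ha
      rw [Metric.mem_ball, dist_eq_norm] at ha
      intro t
      have key : (∑ i, a i * t i) ≤ (∑ i, t i) / c + (ε / c) * ‖t‖ := by
        have h1 : ∀ i, a i * t i ≤ t i / c + (ε / (c * n)) * |t i| := by
          intro i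
          have h2 : |a i - 1 / c| ≤ ‖a - (fun _ => 1 / c)‖ := by
            have := norm_le_pi_norm (a - fun _ => 1 / c) i
            rwa [Real.norm_eq_abs] at this
          have h3 : |a i - 1 / c| < ε / (c * n) := lt_of_le_of_lt h2 ha
          have h4 : (a i - 1 / c) * t i ≤ |a i - 1/c| * |t i| := by
            calc (a i - 1 / c) * t i ≤ |(a i - 1 / c) * t i| := le_abs_self _
              _ = |a i - 1/c| * |t i| := abs_mul _ _
          have h5 : (a i - 1 / c) * t i ≤ (ε / (c * n)) * |t i| :=
            le_trans h4 (mul_le_mul_of_nonneg_right h3.le (abs_nonneg _))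
          have h6 : a i * t i = t i / c + (a i - 1 / c) * t i := by ring
          rw [h6]
          linarith
        calc (∑ i, a i * t i) ≤ ∑ i, (t i / c + (ε / (c * n)) * |t i|) :=
              Finset.sum_le_sum fun i _ => h1 i
          _ = (∑ i, t i) / c + (ε / (c * n)) * ∑ i, |t i| := by
              rw [Finset.sum_add_distrib, ← Finset.sum_div, ← Finset.mul_sum]
          _ ≤ (∑ i, t i) / c + (ε / c) * ‖t‖ := by
              have h5 : (ε / (c * n)) * (∑ i, |t i|) ≤ (ε / (c * n)) * (n * ‖t‖) :=
                mul_le_mul_of_nonneg_left (hsumabs t) (by positivity)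
              have h6 : (ε / (c * n)) * (n * ‖t‖) = (ε / c) * ‖t‖ := by
                field_simp
              linarith
      have h7 := hunif t
      simp only [hΦ_def] at h7
      have h8 : (∑ i, t i) / c + (ε / c) * ‖t‖ ≤ ψp t := by
        have h9 : ((∑ i, t i) + ε * ‖t‖) / c ≤ ψp t := by
          rw [div_le_iff₀ hc]
          nlinarith
        calc (∑ i, t i) / c + (ε / c) * ‖t‖ = ((∑ i, t i) + ε * ‖t‖) / c := by ring
          _ ≤ ψp t := h9
      linarith
    have hRP : (fun _ : Fin n => 1 / c) ∈
        interior {a : Fin n → ℝ | ∀ t, (∑ i, a i * t i) ≤ ψp t} → P := by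
      intro hR t ht
      obtain ⟨δ, hδ, hball⟩ := Metric.mem_nhds_iff.mp (mem_interior_iff_mem_nhds.mp hR)
      set a : Fin n → ℝ := fun i => 1 / c + (δ / 2) * (if 0 ≤ t i then 1 else -1) with ha_def
      have haball : a ∈ Metric.ball (fun _ => 1 / c : Fin n → ℝ) δ := by
        rw [Metric.mem_ball, dist_eq_norm]
        have : ∀ i, |a i - 1 / c| ≤ δ / 2 := by
          intro i
          rw [ha_def]
          simp only [add_sub_cancel_left]
          rw [abs_mul]
          have : |(if 0 ≤ t i then (1:ℝ) else -1)| = 1 := by split <;> simp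
          rw [this, mul_one, abs_of_pos (by positivity)]
        have hle : ‖a - (fun _ => 1 / c : Fin n → ℝ)‖ ≤ δ / 2 := by
          apply pi_norm_le_iff_of_nonneg (by positivity) |>.mpr
          intro i
          rw [Real.norm_eq_abs]
          exact this i
        linarith
      have hmem := hball haball t
      have hsum : (∑ i, a i * t i) = (∑ i, t i) / c + (δ / 2) * ∑ i, |t i| := by
        rw [Finset.sum_div, Finset.mul_sum, ← Finset.sum_add_distrib]
        apply Finset.sum_congr rfl
        intro i _
        rw [ha_def]
        rcases le_or_gt 0 (t i) with h | h
        · simp only [if_pos h]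
          rw [abs_of_nonneg h]
          ring
        · simp only [if_neg (not_le.mpr h)]
          rw [abs_of_neg h]
          ring
      have hpos' : 0 < ∑ i, |t i| := by
        have hex : ∃ i, t i ≠ 0 := by
          by_contra hco
          push_neg at hco
          exact ht (funext fun i => hco i)
        obtain ⟨i, hi⟩ := hex
        exact Finset.sum_pos' (fun j _ => abs_nonneg _)
          ⟨i, Finset.mem_univ i, abs_pos.mpr hi⟩
      rw [hsum] at hmem
      have h1 := mul_le_mul_of_nonneg_left hmem hc.le
      have h2 : c * ((∑ i, t i) / c) = ∑ i, t i := by field_simp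
      rw [mul_add, h2] at h1
      nlinarith [mul_pos (mul_pos hc hδ) hpos']
    refine ⟨⟨hQP, hPQ⟩, ⟨fun h => hPR (hQP h), fun h => hPQ (hRP h)⟩⟩
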